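/- arXiv:1402.3007 — 2 statements merged into one kernel-verified Lean document; each statement's English description precedes it below -/
import Mathlib

section
/- Every complex zero of Δ_L(k) = π( σ_L(e^{2iak}+1)(e^{2ibkσ_L/σ_R}−1) + σ_R(e^{2iak}−1)(e^{2ibkσ_L/σ_R}+1) ) is real. Equivalently, if k ∈ ℂ with Δ_L(k)=0, then Im k = 0. -/
open Complex Real

lemma re_sub_mul_conj_add (z : ℂ) :
    ((z - 1) * (starRingEnd ℂ) (z + 1)).re = Complex.normSq z - 1 := by
  simp [Complex.mul_re, Complex.normSq_apply, Complex.sub_re, Complex.add_re,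
    Complex.sub_im, Complex.add_im]
  ring

lemma normSq_exp (z : ℂ) : Complex.normSq (Complex.exp z) = Real.exp (2 * z.re) := by
  rw [Complex.normSq_eq_norm_sq, Complex.norm_exp, sq, ← Real.exp_add]
  ring_nf

/-- Every complex zero of the determinant
`Δ_L(k) = π(σ_L(e^{2iak}+1)(e^{2ibkσ_L/σ_R}−1) + σ_R(e^{2iak}−1)(e^{2ibkσ_L/σ_R}+1))`
is real. -/
theorem DeltaL_zeros_real
    (a b σL σR : ℝ) (ha : 0 < a) (hb : 0 < b) (hσL : 0 < σL) (hσR : 0 < σR)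
    (k : ℂ)
    (hzero : (π : ℂ) *
      ((σL : ℂ) * (Complex.exp (2 * Complex.I * (a : ℂ) * k) + 1) *
        (Complex.exp (2 * Complex.I * (b : ℂ) * k * (σL : ℂ) / (σR : ℂ)) - 1) +
       (σR : ℂ) * (Complex.exp (2 * Complex.I * (a : ℂ) * k) - 1) *
        (Complex.exp (2 * Complex.I * (b : ℂ) * k * (σL : ℂ) / (σR : ℂ)) + 1)) = 0) :
    k.im = 0 := by
  set u : ℂ := Complex.exp (2 * Complex.I * (a : ℂ) * k) with hu_def
  set v : ℂ := Complex.exp (2 * Complex.I * (b : ℂ) * k * (σL : ℂ) / (σR : ℂ)) with hv_def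
  have hπ : (π : ℂ) ≠ 0 := by
    exact_mod_cast Complex.ofReal_ne_zero.mpr Real.pi_ne_zero
  have h0 : (σL : ℂ) * (u + 1) * (v - 1) + (σR : ℂ) * (u - 1) * (v + 1) = 0 := by
    rcases mul_eq_zero.mp hzero with h | h
    · exact absurd h hπ
    · exact h
  -- exponent real parts
  have hre1 : (2 * Complex.I * (a : ℂ) * k).re = -2 * a * k.im := by
    simp [Complex.mul_re, Complex.mul_im]
  have hσR' : (σR : ℂ) ≠ 0 := by exact_mod_cast hσR.ne'
  have hexp2 : 2 * Complex.I * (b : ℂ) * k * (σL : ℂ) / (σR : ℂ)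
      = 2 * Complex.I * ((b * σL / σR : ℝ) : ℂ) * k := by
    push_cast
    field_simp
  have hre2 : (2 * Complex.I * (b : ℂ) * k * (σL : ℂ) / (σR : ℂ)).re
      = -2 * (b * σL / σR) * k.im := by
    rw [hexp2]
    simp [Complex.mul_re, Complex.mul_im]
  have hnu : Complex.normSq u = Real.exp (-4 * a * k.im) := by
    rw [hu_def, normSq_exp, hre1]; ring_nf
  have hnv : Complex.normSq v = Real.exp (-4 * (b * σL / σR) * k.im) := by
    rw [hv_def, normSq_exp, hre2]; ring_nf
  -- the key real identity
  have key : σL * Complex.normSq (u + 1) * (Complex.normSq v - 1)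
      + σR * Complex.normSq (v + 1) * (Complex.normSq u - 1) = 0 := by
    have hprod : ((σL : ℂ) * (u + 1) * (v - 1) + (σR : ℂ) * (u - 1) * (v + 1))
        * ((starRingEnd ℂ) (u + 1) * (starRingEnd ℂ) (v + 1))
        = (σL : ℂ) * Complex.normSq (u + 1) * ((v - 1) * (starRingEnd ℂ) (v + 1))
          + (σR : ℂ) * Complex.normSq (v + 1) * ((u - 1) * (starRingEnd ℂ) (u + 1)) := by
      rw [← Complex.mul_conj, ← Complex.mul_conj]
      ring
    have hz : ((σL : ℂ) * Complex.normSq (u + 1) * ((v - 1) * (starRingEnd ℂ) (v + 1))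
          + (σR : ℂ) * Complex.normSq (v + 1) * ((u - 1) * (starRingEnd ℂ) (u + 1))) = 0 := by
      rw [← hprod, h0, zero_mul]
    have := congrArg Complex.re hz
    simp [Complex.add_re, Complex.mul_re, Complex.ofReal_re, Complex.ofReal_im,
      re_sub_mul_conj_add] at this
    simp only [Complex.normSq_apply, Complex.add_re, Complex.add_im, Complex.one_re,
      Complex.one_im] at this ⊢
    linear_combination this
  -- now sign analysis
  by_contra ht
  rcases lt_or_gt_of_ne ht with htneg | htpos
  · -- k.im < 0 : both normSq u, normSq v > 1
    have hnu1 : 1 < Complex.normSq u := by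
      rw [hnu]; exact Real.one_lt_exp_iff.mpr (by nlinarith)
    have hnv1 : 1 < Complex.normSq v := by
      rw [hnv]
      have hpos : 0 < b * σL / σR := by positivity
      exact Real.one_lt_exp_iff.mpr (by nlinarith)
    have hu1 : u ≠ -1 := by
      intro h
      rw [h] at hnu1
      simp [Complex.normSq_apply] at hnu1
    have hpos1 : 0 < Complex.normSq (u + 1) := by
      rw [Complex.normSq_pos]
      intro h
      exact hu1 (by linear_combination h)
    have t1 : 0 < σL * Complex.normSq (u + 1) * (Complex.normSq v - 1) := by
      apply mul_pos (mul_pos hσL hpos1); linarith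
    have t2 : 0 ≤ σR * Complex.normSq (v + 1) * (Complex.normSq u - 1) := by
      apply mul_nonneg (mul_nonneg hσR.le (Complex.normSq_nonneg _)); linarith
    linarith
  · -- k.im > 0 : both normSq u, normSq v < 1
    have hnu1 : Complex.normSq u < 1 := by
      rw [hnu]; exact Real.exp_lt_one_iff.mpr (by nlinarith)
    have hnv1 : Complex.normSq v < 1 := by
      rw [hnv]
      have hpos : 0 < b * σL / σR := by positivity
      exact Real.exp_lt_one_iff.mpr (by nlinarith)
    have hu1 : u ≠ -1 := by
      intro h
      rw [h] at hnu1
      simp [Complex.normSq_apply] at hnu1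
    have hpos1 : 0 < Complex.normSq (u + 1) := by
      rw [Complex.normSq_pos]
      intro h
      exact hu1 (by linear_combination h)
    have t1 : σL * Complex.normSq (u + 1) * (Complex.normSq v - 1) < 0 := by
      apply mul_neg_of_pos_of_neg (mul_pos hσL hpos1); linarith
    have t2 : σR * Complex.normSq (v + 1) * (Complex.normSq u - 1) ≤ 0 := by
      apply mul_nonpos_of_nonneg_of_nonpos (mul_nonneg hσR.le (Complex.normSq_nonneg _)); linarith
    linarith
end

section
/- For positive reals σ_L, σ_M, σ_R, the strict inequality (σ_L+σ_M)(σ_M+σ_R) > |σ_L−σ_M|·|σ_M−σ_R| holds. Consequently, for a > 0 the entire function k ↦ (σ_L−σ_M)(σ_M−σ_R) + e^{4iakσ_L/σ_M}(σ_L+σ_M)(σ_M+σ_R) has no zeros in the open lower half-plane {Im k < 0}, and the function k ↦ (σ_L+σ_M)(σ_M+σ_R) + e^{4iakσ_R/σ_M}(σ_L−σ_M)(σ_M−σ_R) has no zeros in the open upper half-plane {Im k > 0}. -/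
open Complex Real

/-- For positive `σ_L, σ_M, σ_R` the strict inequality
`(σ_L+σ_M)(σ_M+σ_R) > |σ_L−σ_M|·|σ_M−σ_R|` holds; consequently the determinant
functions of the three-layer infinite-domain problem have no zeros in the open
lower (resp. upper) half-plane. -/
theorem three_layer_determinants_nonvanishing
    (a σL σM σR : ℝ) (ha : 0 < a) (hσL : 0 < σL) (hσM : 0 < σM) (hσR : 0 < σR) :
    ((σL + σM) * (σM + σR) > |σL - σM| * |σM - σR|) ∧
    (∀ k : ℂ, k.im < 0 →
      ((σL:ℂ) - σM) * ((σM:ℂ) - σR) +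
        Complex.exp (4 * Complex.I * (a:ℂ) * k * (σL:ℂ) / (σM:ℂ)) *
          ((σL:ℂ) + σM) * ((σM:ℂ) + σR) ≠ 0) ∧
    (∀ k : ℂ, 0 < k.im →
      ((σL:ℂ) + σM) * ((σM:ℂ) + σR) +
        Complex.exp (4 * Complex.I * (a:ℂ) * k * (σR:ℂ) / (σM:ℂ)) *
          ((σL:ℂ) - σM) * ((σM:ℂ) - σR) ≠ 0) := by
  have h1 : |σL - σM| < σL + σM := by rw [abs_lt]; constructor <;> linarith
  have h2 : |σM - σR| < σM + σR := by rw [abs_lt]; constructor <;> linarith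
  have hkey : |σL - σM| * |σM - σR| < (σL + σM) * (σM + σR) :=
    mul_lt_mul'' h1 h2 (abs_nonneg _) (abs_nonneg _)
  have habsA : ‖((σL:ℂ) - σM) * ((σM:ℂ) - σR)‖ = |σL - σM| * |σM - σR| := by
    rw [norm_mul, ← ofReal_sub, ← ofReal_sub, Complex.norm_real, Complex.norm_real, Real.norm_eq_abs, Real.norm_eq_abs]
  have habsB : ‖((σL:ℂ) + σM) * ((σM:ℂ) + σR)‖ = (σL + σM) * (σM + σR) := by
    rw [norm_mul, ← ofReal_add, ← ofReal_add, Complex.norm_real, Complex.norm_real, Real.norm_eq_abs, Real.norm_eq_abs]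
    rw [abs_of_pos (by linarith), abs_of_pos (by linarith)]
  refine ⟨hkey, ?_, ?_⟩
  · intro k hk h
    have hre : (4 * Complex.I * (a:ℂ) * k * (σL:ℂ) / (σM:ℂ)).re
        = (4 * a * σL / σM) * (-k.im) := by
      have he : 4 * Complex.I * (a:ℂ) * k * (σL:ℂ) / (σM:ℂ)
          = ((4 * a * σL / σM : ℝ) : ℂ) * (Complex.I * k) := by
        push_cast
        field_simp
      rw [he, Complex.re_ofReal_mul]
      simp
    have hexp : 1 < ‖Complex.exp (4 * Complex.I * (a:ℂ) * k * (σL:ℂ) / (σM:ℂ))‖ := by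
      rw [Complex.norm_exp, hre, show (1:ℝ) = Real.exp 0 from (Real.exp_zero).symm]
      exact Real.exp_lt_exp.mpr (mul_pos (by positivity) (by linarith))
    have heq := congrArg (‖·‖) (eq_neg_of_add_eq_zero_left h)
    rw [norm_neg, mul_assoc, habsA, norm_mul, habsB] at heq
    have hPpos : 0 < (σL + σM) * (σM + σR) := by positivity
    nlinarith [abs_nonneg (σL - σM), abs_nonneg (σM - σR)]
  · intro k hk h
    have hre : (4 * Complex.I * (a:ℂ) * k * (σR:ℂ) / (σM:ℂ)).re
        = (4 * a * σR / σM) * (-k.im) := by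
      have he : 4 * Complex.I * (a:ℂ) * k * (σR:ℂ) / (σM:ℂ)
          = ((4 * a * σR / σM : ℝ) : ℂ) * (Complex.I * k) := by
        push_cast
        field_simp
      rw [he, Complex.re_ofReal_mul]
      simp
    have hexp : ‖Complex.exp (4 * Complex.I * (a:ℂ) * k * (σR:ℂ) / (σM:ℂ))‖ < 1 := by
      rw [Complex.norm_exp, hre, show (1:ℝ) = Real.exp 0 from (Real.exp_zero).symm]
      refine Real.exp_lt_exp.mpr ?_
      have : 0 < 4 * a * σR / σM := by positivity
      nlinarith
    have heq := congrArg (‖·‖) (eq_neg_of_add_eq_zero_left h)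
    rw [norm_neg, mul_assoc, habsB, norm_mul, habsA] at heq
    have hQ : 0 ≤ |σL - σM| * |σM - σR| := mul_nonneg (abs_nonneg _) (abs_nonneg _)
    nlinarith [mul_le_of_le_one_left hQ hexp.le]
end
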